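/- arXiv:1210.3426 — 3 statements merged into one kernel-verified Lean document; each statement's English description precedes it below -/
import Mathlib

section
/- Let M ∈ Mat_n(ℂ) be symmetric with positive-definite real part. Then for every u ∈ ℂⁿ both Gaussian integrals below converge absolutely and their product equals 1: [ (2πħ)^(−n/2) ∫_{ℝⁿ} exp(−(1/(4ħ)) ξMξᵀ) dξ ] · [ (2πħ)^(−n/2) ∫_{ℝⁿ} exp(−(1/ħ) (u−x) M⁻¹ (u−x)ᵀ) dx ] = 1. (This is the paper's identity ∫_{ℝⁿ} δ*(u−x) d̄x = 1 for the star-delta function of full variables, with M = iK.) -/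
open MeasureTheory

noncomputable section

/-- The bilinear form `a M bᵀ = ∑ᵢⱼ aᵢ Mᵢⱼ bⱼ` (no conjugation). -/
def bil {n : ℕ} (M : Matrix (Fin n) (Fin n) ℂ) (a b : Fin n → ℂ) : ℂ :=
  ∑ i, ∑ j, a i * M i j * b j

/-- Inclusion of a real row vector into ℂⁿ. -/
def cvec {n : ℕ} (x : Fin n → ℝ) : Fin n → ℂ := fun i => (x i : ℂ)

open Matrix Complex

namespace Stmt4Aux

variable {n : ℕ}

lemma bil_eq (M : Matrix (Fin n) (Fin n) ℂ) (a b : Fin n → ℂ) :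
    bil M a b = a ⬝ᵥ M *ᵥ b := by
  unfold bil
  simp only [dotProduct, mulVec, Finset.mul_sum, mul_assoc]

lemma bil_mulVec (M Q : Matrix (Fin n) (Fin n) ℂ) (v : Fin n → ℂ) :
    bil M (Q *ᵥ v) (Q *ᵥ v) = bil (Qᵀ * M * Q) v v := by
  rw [bil_eq, bil_eq, ← mulVec_mulVec, ← mulVec_mulVec,
    dotProduct_mulVec v Qᵀ, vecMul_transpose, mulVec_mulVec]

lemma bil_diagonal (μ : Fin n → ℂ) (v : Fin n → ℂ) :
    bil (diagonal μ) v v = ∑ i, μ i * v i ^ 2 := by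
  unfold bil
  refine Finset.sum_congr rfl fun i _ => ?_
  rw [Finset.sum_eq_single i]
  · rw [diagonal_apply_eq]; ring
  · intro j _ hj; rw [diagonal_apply_ne' _ hj]; ring
  · intro h; exact absurd (Finset.mem_univ i) h

lemma cvec_mulVec (Q : Matrix (Fin n) (Fin n) ℝ) (x : Fin n → ℝ) :
    cvec (Q *ᵥ x) = (Q.map Complex.ofReal) *ᵥ (cvec x) := by
  funext i
  simp [cvec, mulVec, dotProduct, Matrix.map_apply]


lemma cov (Q : Matrix (Fin n) (Fin n) ℝ) (hQ : Q.det ≠ 0) (f : (Fin n → ℝ) → ℂ) :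
    (Integrable (fun x => f (Q *ᵥ x)) volume ↔ Integrable f volume) ∧
    ∫ x, f (Q *ᵥ x) = |Q.det|⁻¹ • ∫ x, f x := by
  have hinv : Invertible Q := Q.invertibleOfIsUnitDet hQ.isUnit
  let e : (Fin n → ℝ) ≃ₗ[ℝ] (Fin n → ℝ) := Matrix.toLinearEquiv' Q hinv
  have hcoe : ∀ x, e x = Matrix.toLin' Q x := fun x => rfl
  have emb : MeasurableEmbedding (Matrix.toLin' Q) := by
    have := e.toContinuousLinearEquiv.toHomeomorph.measurableEmbedding
    convert this using 1
    funext x; exact (hcoe x).symm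
  have hmap := Real.map_matrix_volume_pi_eq_smul_volume_pi hQ
  constructor
  · have h1 := emb.integrable_map_iff (g := f) (μ := volume)
    rw [hmap, integrable_smul_measure (by simp [abs_ne_zero, hQ]) (by simp)] at h1
    have : (f ∘ Matrix.toLin' Q) = fun x => f (Q *ᵥ x) := by
      funext x; simp [Matrix.toLin'_apply]
    rw [this] at h1
    exact h1.symm
  · have h2 := emb.integral_map (μ := volume) f
    rw [hmap, integral_smul_measure] at h2
    simp only [Matrix.toLin'_apply] at h2
    rw [← h2, ENNReal.toReal_ofReal (abs_nonneg _), abs_inv]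

lemma gauss (b c : Fin n → ℂ) (hb : ∀ i, 0 < (b i).re) :
    Integrable (fun y : Fin n → ℝ => Complex.exp (∑ i, -(b i) * ((c i - (y i : ℂ)) ^ 2))) volume ∧
    ∫ y : Fin n → ℝ, Complex.exp (∑ i, -(b i) * ((c i - (y i : ℂ)) ^ 2))
      = ∏ i, (Real.pi / b i) ^ (1/2 : ℂ) := by
  have key : ∀ y : Fin n → ℝ, (∑ i, -(b i) * ((c i - (y i : ℂ)) ^ 2)) =
      (-∑ i, b i * (y i : ℂ)^2 + ∑ i, (2 * b i * c i) * (y i : ℂ)) + (∑ i, -(b i * c i ^ 2)) := by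
    intro y
    rw [← Finset.sum_neg_distrib, ← Finset.sum_add_distrib, ← Finset.sum_add_distrib]
    exact Finset.sum_congr rfl fun i _ => by ring
  have hexp : ∀ y : Fin n → ℝ, Complex.exp (∑ i, -(b i) * ((c i - (y i : ℂ)) ^ 2)) =
      Complex.exp (-∑ i, b i * (y i : ℂ)^2 + ∑ i, (2 * b i * c i) * (y i : ℂ)) *
        Complex.exp (∑ i, -(b i * c i ^ 2)) := by
    intro y; rw [← Complex.exp_add, ← key]
  constructor
  · refine Integrable.congr ((GaussianFourier.integrable_cexp_neg_sum_mul_add hb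
      (fun i => 2 * b i * c i)).mul_const (Complex.exp (∑ i, -(b i * c i ^ 2)))) ?_
    filter_upwards with y
    rw [hexp y]
  · calc ∫ y : Fin n → ℝ, Complex.exp (∑ i, -(b i) * ((c i - (y i : ℂ)) ^ 2))
        = ∫ y : Fin n → ℝ, Complex.exp (-∑ i, b i * (y i : ℂ)^2 + ∑ i, (2 * b i * c i) * (y i : ℂ)) *
            Complex.exp (∑ i, -(b i * c i ^ 2)) := by
          exact integral_congr_ae (Filter.Eventually.of_forall hexp)
      _ = (∏ i, (Real.pi / b i) ^ (1/2 : ℂ) * Complex.exp ((2 * b i * c i) ^ 2 / (4 * b i))) *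
            Complex.exp (∑ i, -(b i * c i ^ 2)) := by
          rw [integral_mul_const, GaussianFourier.integral_cexp_neg_sum_mul_add hb]
      _ = ∏ i, (Real.pi / b i) ^ (1/2 : ℂ) := by
          rw [Finset.prod_mul_distrib, ← Complex.exp_sum, mul_assoc, ← Complex.exp_add,
            ← Finset.sum_add_distrib]
          have : ∀ i ∈ Finset.univ, (2 * b i * c i) ^ 2 / (4 * b i) + -(b i * c i ^ 2) = 0 := by
            intro i _
            have hbi : b i ≠ 0 := by
              intro h
              have := hb i
              rw [h] at this
              simp at this
            field_simp
            ring
          rw [Finset.sum_congr rfl this]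
          simp

lemma sqrt_mul_sqrt {z w : ℂ} (hz : 0 < z.re) (hw : 0 < w.re) :
    z ^ (1/2 : ℂ) * w ^ (1/2 : ℂ) = (z * w) ^ (1/2 : ℂ) := by
  have hz0 : z ≠ 0 := fun h => by simp [h] at hz
  have hw0 : w ≠ 0 := fun h => by simp [h] at hw
  have hargz : |z.arg| < Real.pi / 2 := Complex.abs_arg_lt_pi_div_two_iff.2 (Or.inl hz)
  have hargw : |w.arg| < Real.pi / 2 := Complex.abs_arg_lt_pi_div_two_iff.2 (Or.inl hw)
  have harg : z.arg + w.arg ∈ Set.Ioc (-Real.pi) Real.pi := by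
    constructor
    · nlinarith [abs_lt.1 hargz, abs_lt.1 hargw, Real.pi_pos]
    · nlinarith [abs_lt.1 hargz, abs_lt.1 hargw, Real.pi_pos]
  rw [Complex.cpow_def_of_ne_zero hz0, Complex.cpow_def_of_ne_zero hw0,
    Complex.cpow_def_of_ne_zero (mul_ne_zero hz0 hw0), ← Complex.exp_add,
    Complex.log_mul hz0 hw0 harg, add_mul]

open scoped MatrixOrder in
lemma diag_M (M : Matrix (Fin n) (Fin n) ℂ) (hsymm : M.IsSymm)
    (hpos : ∀ ξ : Fin n → ℝ, ξ ≠ 0 → 0 < ∑ i, ∑ j, ξ i * (M i j).re * ξ j) :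
    ∃ (P : Matrix (Fin n) (Fin n) ℝ) (d : Fin n → ℝ), P.det ≠ 0 ∧
      (P.map Complex.ofReal)ᵀ * M * (P.map Complex.ofReal)
        = diagonal (fun i => 1 + (d i : ℂ) * Complex.I) := by
  classical
  set A : Matrix (Fin n) (Fin n) ℝ := Matrix.of fun i j => (M i j).re with hA_def
  set B : Matrix (Fin n) (Fin n) ℝ := Matrix.of fun i j => (M i j).im with hB_def
  have hMsymm : ∀ i j, M j i = M i j := fun i j => by
    have := congrFun (congrFun hsymm j) i
    simpa [Matrix.transpose_apply] using this.symm
  have hAsymm : Aᵀ = A := by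
    ext i j; simp [hA_def, hMsymm i j]
  have hBsymm : Bᵀ = B := by
    ext i j; simp [hB_def, hMsymm i j]
  have hAherm : A.IsHermitian := by
    rw [Matrix.IsHermitian, conjTranspose]
    simpa using congrArg (fun X => X.map (starRingEnd ℝ)) hAsymm |>.trans (by ext i j; simp)
  have hA : A.PosDef := by
    refine PosDef.of_dotProduct_mulVec_pos hAherm fun x hx => ?_
    have h := hpos x hx
    simp only [dotProduct, mulVec, star_trivial]
    refine lt_of_lt_of_eq h ?_
    exact Finset.sum_congr rfl fun i _ => by
      rw [Finset.mul_sum]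
      exact Finset.sum_congr rfl fun j _ => by
        rw [show A i j = (M i j).re from rfl]; ring
  -- S := sqrt of A⁻¹
  have hAinv : (A⁻¹).PosDef := hA.inv
  set S : Matrix (Fin n) (Fin n) ℝ := CFC.sqrt A⁻¹ with hS_def
  have hSS : S * S = A⁻¹ := CFC.sqrt_mul_sqrt_self A⁻¹ hAinv.posSemidef.nonneg
  have hSherm : S.IsHermitian := (CFC.sqrt_nonneg A⁻¹).posSemidef.1
  have hSsymm : Sᵀ = S := by
    have := hSherm
    rwa [Matrix.IsHermitian, conjTranspose_eq_transpose_of_trivial] at this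
  have hAdet : A.det ≠ 0 := hA.det_pos.ne'
  have hAunit : IsUnit A.det := hAdet.isUnit
  have hSdet : S.det ≠ 0 := by
    intro h
    have : (A⁻¹).det = 0 := by rw [← hSS, det_mul, h, zero_mul]
    rw [det_nonsing_inv] at this
    exact hAdet (by simpa using this)
  have hSAS : S * A * S = 1 := by
    set X := S * A * S with hX
    have hXX : X * X = X := by
      have h1 : X * X = S * (A * (S * S) * A) * S := by
        rw [hX]; noncomm_ring
      rw [h1, hSS, Matrix.mul_nonsing_inv A hAunit, one_mul]
    have hXdet : IsUnit X.det := by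
      rw [hX, det_mul, det_mul]
      exact (hSdet.isUnit.mul hAunit).mul hSdet.isUnit
    calc X = 1 * X := (one_mul X).symm
      _ = (X⁻¹ * X) * X := by rw [Matrix.nonsing_inv_mul X hXdet]
      _ = X⁻¹ * (X * X) := by rw [mul_assoc]
      _ = X⁻¹ * X := by rw [hXX]
      _ = 1 := Matrix.nonsing_inv_mul X hXdet
  -- C := S * B * S
  set C : Matrix (Fin n) (Fin n) ℝ := S * B * S with hC_def
  have hCherm : C.IsHermitian := by
    rw [Matrix.IsHermitian, conjTranspose_eq_transpose_of_trivial, hC_def,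
      transpose_mul, transpose_mul, hSsymm, hBsymm]
    noncomm_ring
  set U : Matrix (Fin n) (Fin n) ℝ := (hCherm.eigenvectorUnitary : Matrix (Fin n) (Fin n) ℝ) with hU_def
  set d : Fin n → ℝ := hCherm.eigenvalues with hd_def
  have hUC : Uᵀ * C * U = diagonal d := by
    have := hCherm.conjStarAlgAut_star_eigenvectorUnitary
    rw [Unitary.conjStarAlgAut_star_apply] at this
    simpa [hU_def, star_eq_conjTranspose, conjTranspose_eq_transpose_of_trivial] using this
  have hUU : Uᵀ * U = 1 := by
    have := (Matrix.mem_unitaryGroup_iff').mp hCherm.eigenvectorUnitary.2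
    simpa [star_eq_conjTranspose, conjTranspose_eq_transpose_of_trivial] using this
  have hUdet : U.det ≠ 0 := by
    intro h
    have : (Uᵀ * U).det = 0 := by rw [det_mul, h, mul_zero]
    rw [hUU, det_one] at this
    exact one_ne_zero this
  refine ⟨S * U, d, ?_, ?_⟩
  · rw [det_mul]
    exact mul_ne_zero hSdet hUdet
  · -- complex computation
    have hPA : (S * U)ᵀ * A * (S * U) = 1 := by
      rw [transpose_mul, hSsymm]
      calc Uᵀ * S * A * (S * U) = Uᵀ * (S * A * S) * U := by noncomm_ring
        _ = Uᵀ * U := by rw [hSAS, mul_one]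
        _ = 1 := hUU
    have hPB : (S * U)ᵀ * B * (S * U) = diagonal d := by
      rw [transpose_mul, hSsymm]
      calc Uᵀ * S * B * (S * U) = Uᵀ * (S * B * S) * U := by noncomm_ring
        _ = diagonal d := hUC
    have hM_split : M = A.map Complex.ofReal + Complex.I • (B.map Complex.ofReal) := by
      ext i j
      simp only [Matrix.add_apply, Matrix.map_apply, Matrix.smul_apply, smul_eq_mul,
        hA_def, hB_def, Matrix.of_apply]
      rw [mul_comm]
      exact (Complex.re_add_im (M i j)).symm
    have hmap : ∀ (X Y : Matrix (Fin n) (Fin n) ℝ), (X * Y).map Complex.ofReal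
        = X.map Complex.ofReal * Y.map Complex.ofReal := fun X Y =>
      Matrix.map_mul (f := Complex.ofRealHom)
    have htr : ((S * U).map Complex.ofReal)ᵀ = ((S * U)ᵀ).map Complex.ofReal :=
      (Matrix.transpose_map).symm
    rw [hM_split]
    have expand : ((S*U).map Complex.ofReal)ᵀ
          * (A.map Complex.ofReal + Complex.I • (B.map Complex.ofReal))
          * ((S*U).map Complex.ofReal)
        = (((S*U)ᵀ * A * (S*U)).map Complex.ofReal)
          + Complex.I • (((S*U)ᵀ * B * (S*U)).map Complex.ofReal) := by
      rw [htr, mul_add, add_mul, Matrix.mul_smul, Matrix.smul_mul, ← hmap, ← hmap, ← hmap, ← hmap]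
    rw [expand, hPA, hPB]
    ext i j
    by_cases h : i = j
    · subst h
      simp [Matrix.map_apply, Matrix.smul_apply, diagonal_apply_eq, Matrix.one_apply_eq, mul_comm]
    · simp [Matrix.map_apply, Matrix.smul_apply, Matrix.one_apply_ne h, diagonal_apply_ne _ h]

end Stmt4Aux

open Stmt4Aux

/-- `∫ δ*(u-x) d̄x = 1`.  For symmetric `M` with positive-definite real part,
both normalized Gaussian integrals converge absolutely and their product is `1`. -/
theorem stmt4 {n : ℕ} (ℏ : ℝ) (hℏ : 0 < ℏ)
    (M : Matrix (Fin n) (Fin n) ℂ) (hsymm : M.IsSymm)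
    (hpos : ∀ ξ : Fin n → ℝ, ξ ≠ 0 → 0 < ∑ i, ∑ j, ξ i * (M i j).re * ξ j)
    (u : Fin n → ℂ) :
    Integrable (fun ξ : Fin n → ℝ =>
        Complex.exp (-(1 / (4 * (ℏ : ℂ))) * bil M (cvec ξ) (cvec ξ))) volume ∧
    Integrable (fun x : Fin n → ℝ =>
        Complex.exp (-(1 / (ℏ : ℂ)) * bil M⁻¹ (u - cvec x) (u - cvec x))) volume ∧
    ((((Real.sqrt (2 * Real.pi * ℏ))⁻¹ ^ n : ℝ) : ℂ) *
        ∫ ξ : Fin n → ℝ,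
          Complex.exp (-(1 / (4 * (ℏ : ℂ))) * bil M (cvec ξ) (cvec ξ))) *
      ((((Real.sqrt (2 * Real.pi * ℏ))⁻¹ ^ n : ℝ) : ℂ) *
        ∫ x : Fin n → ℝ,
          Complex.exp (-(1 / (ℏ : ℂ)) * bil M⁻¹ (u - cvec x) (u - cvec x)))
      = 1 := by
  classical
  have hℏ' : (ℏ : ℂ) ≠ 0 := Complex.ofReal_ne_zero.2 hℏ.ne'
  obtain ⟨P, d, hPdet, hPMP⟩ := diag_M M hsymm hpos
  set lam : Fin n → ℂ := fun i => 1 + (d i : ℂ) * Complex.I with hlam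
  have hlam_re : ∀ i, (lam i).re = 1 := by intro i; simp [hlam]
  have hlam_ne : ∀ i, lam i ≠ 0 := by
    intro i h
    have := congrArg Complex.re h
    rw [hlam_re i] at this
    simp at this
  set Pc := P.map Complex.ofReal with hPc
  set R := P⁻¹ with hR
  have hPR : P * R = 1 := Matrix.mul_nonsing_inv P hPdet.isUnit
  have hRP : R * P = 1 := Matrix.nonsing_inv_mul P hPdet.isUnit
  have hRdet : R.det ≠ 0 := by
    intro h
    have := congrArg Matrix.det hRP
    rw [det_mul, h, zero_mul, det_one] at this
    exact zero_ne_one this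
  set Rc := R.map Complex.ofReal with hRc
  have hmap : ∀ (X Y : Matrix (Fin n) (Fin n) ℝ), (X * Y).map Complex.ofReal
      = X.map Complex.ofReal * Y.map Complex.ofReal := fun X Y =>
    Matrix.map_mul (f := Complex.ofRealHom)
  have hone : (1 : Matrix (Fin n) (Fin n) ℝ).map Complex.ofReal = 1 :=
    Matrix.map_one _ Complex.ofReal_zero Complex.ofReal_one
  have hPcRc : Pc * Rc = 1 := by rw [hPc, hRc, ← hmap, hPR, hone]
  have hRcPc : Rc * Pc = 1 := by rw [hPc, hRc, ← hmap, hRP, hone]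
  have hRTPT : Rcᵀ * Pcᵀ = 1 := by rw [← transpose_mul, hPcRc, transpose_one]
  have hPTRT : Pcᵀ * Rcᵀ = 1 := by rw [← transpose_mul, hRcPc, transpose_one]
  set mu : Fin n → ℂ := fun i => (lam i)⁻¹ with hmu
  have hdiagmul : diagonal lam * diagonal mu = 1 := by
    rw [diagonal_mul_diagonal]
    have : (fun i => lam i * mu i) = fun _ => (1 : ℂ) := by
      funext i; exact mul_inv_cancel₀ (hlam_ne i)
    rw [this, diagonal_one]
  have hM_eq : M = Rcᵀ * diagonal lam * Rc := by
    calc M = (Rcᵀ * Pcᵀ) * M * (Pc * Rc) := by rw [hRTPT, hPcRc, one_mul, mul_one]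
      _ = Rcᵀ * (Pcᵀ * M * Pc) * Rc := by noncomm_ring
      _ = Rcᵀ * diagonal lam * Rc := by rw [hPMP]
  have hMinv : M⁻¹ = Pc * diagonal mu * Pcᵀ := by
    apply Matrix.inv_eq_right_inv
    calc M * (Pc * diagonal mu * Pcᵀ)
        = Rcᵀ * diagonal lam * ((Rc * Pc) * (diagonal mu * Pcᵀ)) := by
          rw [hM_eq]; noncomm_ring
      _ = Rcᵀ * (diagonal lam * diagonal mu) * Pcᵀ := by rw [hRcPc, one_mul]; noncomm_ring
      _ = Rcᵀ * Pcᵀ := by rw [hdiagmul, mul_one]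
      _ = 1 := hRTPT
  -- coefficient vectors
  set b₁ : Fin n → ℂ := fun i => lam i / ((4 * ℏ : ℝ) : ℂ) with hb₁def
  set b₂ : Fin n → ℂ := fun i => mu i / ((ℏ : ℝ) : ℂ) with hb₂def
  have hb₁ : ∀ i, 0 < (b₁ i).re := by
    intro i
    rw [hb₁def]
    simp only [Complex.div_ofReal_re]
    rw [hlam_re]
    positivity
  have hlaminv_re : ∀ i, 0 < ((lam i)⁻¹).re := by
    intro i
    rw [Complex.inv_re]
    apply div_pos
    · rw [hlam_re]; norm_num
    · exact Complex.normSq_pos.2 (hlam_ne i)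
  have hb₂ : ∀ i, 0 < (b₂ i).re := by
    intro i
    rw [hb₂def]
    simp only [Complex.div_ofReal_re]
    exact div_pos (hlaminv_re i) hℏ
  set f₁ : (Fin n → ℝ) → ℂ := fun ξ =>
    Complex.exp (-(1 / (4 * (ℏ : ℂ))) * bil M (cvec ξ) (cvec ξ)) with hf₁
  set f₂ : (Fin n → ℝ) → ℂ := fun x =>
    Complex.exp (-(1 / (ℏ : ℂ)) * bil M⁻¹ (u - cvec x) (u - cvec x)) with hf₂
  -- composition identities
  have hcomp1 : ∀ η : Fin n → ℝ,
      f₁ (P *ᵥ η) = Complex.exp (∑ i, -(b₁ i) * (((0:ℂ) - (η i : ℂ)) ^ 2)) := by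
    intro η
    rw [hf₁]
    simp only
    rw [cvec_mulVec, ← hPc, bil_mulVec, hPMP, bil_diagonal]
    congr 1
    rw [Finset.mul_sum]
    refine Finset.sum_congr rfl fun i _ => ?_
    have hc : cvec η i = (η i : ℂ) := rfl
    rw [hc, hb₁def]
    have h4 : ((4 * ℏ : ℝ) : ℂ) = 4 * (ℏ:ℂ) := by push_cast; ring
    rw [h4]
    field_simp
    try ring
  set c : Fin n → ℂ := Pcᵀ *ᵥ u with hc
  have hcomp2 : ∀ y : Fin n → ℝ,
      f₂ (Rᵀ *ᵥ y) = Complex.exp (∑ i, -(b₂ i) * ((c i - (y i : ℂ)) ^ 2)) := by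
    intro y
    rw [hf₂]
    simp only
    have h1 : cvec (Rᵀ *ᵥ y) = Rcᵀ *ᵥ cvec y := by
      rw [cvec_mulVec, hRc, Matrix.transpose_map]
    have h2 : u - Rcᵀ *ᵥ cvec y = Rcᵀ *ᵥ (c - cvec y) := by
      rw [Matrix.mulVec_sub, hc, mulVec_mulVec, hRTPT, one_mulVec]
    rw [h1, h2, bil_mulVec, transpose_transpose]
    have h3 : Rc * M⁻¹ * Rcᵀ = diagonal mu := by
      rw [hMinv]
      calc Rc * (Pc * diagonal mu * Pcᵀ) * Rcᵀ
          = (Rc * Pc) * diagonal mu * (Pcᵀ * Rcᵀ) := by noncomm_ring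
        _ = diagonal mu := by rw [hRcPc, hPTRT, one_mul, mul_one]
    rw [h3, bil_diagonal]
    congr 1
    rw [Finset.mul_sum]
    refine Finset.sum_congr rfl fun i _ => ?_
    have hcp : (c - cvec y) i = c i - (y i : ℂ) := rfl
    rw [hcp, hb₂def]
    simp only
    field_simp
    try ring
  -- gauss results
  obtain ⟨hint1, hval1⟩ := gauss b₁ (fun _ => (0:ℂ)) hb₁
  obtain ⟨hint2, hval2⟩ := gauss b₂ c hb₂
  have hint1' : Integrable (fun η : Fin n → ℝ => f₁ (P *ᵥ η)) volume := by
    refine hint1.congr ?_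
    filter_upwards with η
    rw [hcomp1 η]
  have hint2' : Integrable (fun y : Fin n → ℝ => f₂ (Rᵀ *ᵥ y)) volume := by
    refine hint2.congr ?_
    filter_upwards with y
    rw [hcomp2 y]
  have hRTdet : (Rᵀ).det ≠ 0 := by rw [det_transpose]; exact hRdet
  have hcov1 := cov P hPdet f₁
  have hcov2 := cov Rᵀ hRTdet f₂
  have hI1 : Integrable f₁ volume := hcov1.1.mp hint1'
  have hI2 : Integrable f₂ volume := hcov2.1.mp hint2'
  refine ⟨hI1, hI2, ?_⟩
  -- compute the integrals
  have hval1' : ∫ η : Fin n → ℝ, f₁ (P *ᵥ η) = ∏ i, ((Real.pi : ℂ) / b₁ i) ^ (1/2 : ℂ) := by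
    rw [← hval1]
    exact integral_congr_ae (Filter.Eventually.of_forall hcomp1)
  have hval2' : ∫ y : Fin n → ℝ, f₂ (Rᵀ *ᵥ y) = ∏ i, ((Real.pi : ℂ) / b₂ i) ^ (1/2 : ℂ) := by
    rw [← hval2]
    exact integral_congr_ae (Filter.Eventually.of_forall hcomp2)
  have hIv1 : ∫ x, f₁ x = ((|P.det| : ℝ) : ℂ) * ∏ i, ((Real.pi : ℂ) / b₁ i) ^ (1/2 : ℂ) := by
    have h := hcov1.2
    rw [hval1'] at h
    have habs : |P.det| ≠ 0 := abs_ne_zero.2 hPdet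
    rw [eq_comm, inv_smul_eq_iff₀ habs] at h
    rw [h, Complex.real_smul]
  have hIv2 : ∫ x, f₂ x = ((|R.det| : ℝ) : ℂ) * ∏ i, ((Real.pi : ℂ) / b₂ i) ^ (1/2 : ℂ) := by
    have h := hcov2.2
    rw [hval2'] at h
    have habs : |(Rᵀ).det| ≠ 0 := abs_ne_zero.2 hRTdet
    rw [eq_comm, inv_smul_eq_iff₀ habs] at h
    rw [h, Complex.real_smul, det_transpose]
  -- the product of the two square-root factors
  have hprod : (∏ i, ((Real.pi : ℂ) / b₁ i) ^ (1/2 : ℂ)) *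
      (∏ i, ((Real.pi : ℂ) / b₂ i) ^ (1/2 : ℂ)) = ((2 * Real.pi * ℏ : ℝ) : ℂ) ^ n := by
    rw [← Finset.prod_mul_distrib]
    have hterm : ∀ i ∈ Finset.univ, ((Real.pi : ℂ) / b₁ i) ^ (1/2 : ℂ) *
        ((Real.pi : ℂ) / b₂ i) ^ (1/2 : ℂ) = ((2 * Real.pi * ℏ : ℝ) : ℂ) := by
      intro i _
      have hre1 : 0 < ((Real.pi : ℂ) / b₁ i).re := by
        have heq : (Real.pi : ℂ) / b₁ i = ((4 * Real.pi * ℏ : ℝ) : ℂ) * (lam i)⁻¹ := by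
          rw [hb₁def]
          push_cast
          field_simp
          try ring
        rw [heq, Complex.re_ofReal_mul]
        apply mul_pos (by positivity) (hlaminv_re i)
      have hre2 : 0 < ((Real.pi : ℂ) / b₂ i).re := by
        have heq : (Real.pi : ℂ) / b₂ i = ((Real.pi * ℏ : ℝ) : ℂ) * lam i := by
          rw [hb₂def, hmu]
          simp only
          push_cast
          field_simp
          try ring
        rw [heq, Complex.re_ofReal_mul, hlam_re]
        positivity
      rw [sqrt_mul_sqrt hre1 hre2]
      have hmulv : (Real.pi : ℂ) / b₁ i * ((Real.pi : ℂ) / b₂ i)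
          = ((4 * Real.pi^2 * ℏ^2 : ℝ) : ℂ) := by
        have h0 : (1 + (d i : ℂ) * Complex.I) ≠ 0 := hlam_ne i
        rw [hb₁def, hb₂def, hmu]
        simp only
        push_cast
        field_simp [h0]
        try ring
        exact mul_inv_cancel₀ (hlam_ne i)
      rw [hmulv]
      have h12 : (1/2 : ℂ) = ((1/2 : ℝ) : ℂ) := by norm_num
      rw [h12, ← Complex.ofReal_cpow (by positivity)]
      congr 1
      rw [← Real.sqrt_eq_rpow,
        show (4 * Real.pi^2 * ℏ^2 : ℝ) = (2 * Real.pi * ℏ)^2 by ring]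
      exact Real.sqrt_sq (by positivity)
    rw [Finset.prod_congr rfl hterm, Finset.prod_const, Finset.card_univ, Fintype.card_fin]
  -- final arithmetic
  rw [hIv1, hIv2]
  have hdet : ((|P.det| : ℝ) : ℂ) * ((|R.det| : ℝ) : ℂ) = 1 := by
    rw [← Complex.ofReal_mul, ← abs_mul, ← det_mul, hPR, det_one]
    norm_num
  have hE : (((Real.sqrt (2 * Real.pi * ℏ))⁻¹ ^ n : ℝ) : ℂ)
      * (((Real.sqrt (2 * Real.pi * ℏ))⁻¹ ^ n : ℝ) : ℂ)
      * ((2 * Real.pi * ℏ : ℝ) : ℂ) ^ n = 1 := by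
    rw [← Complex.ofReal_mul, ← Complex.ofReal_pow, ← Complex.ofReal_mul]
    norm_cast
    rw [← mul_pow, ← mul_pow, ← mul_inv]
    rw [Real.mul_self_sqrt (by positivity)]
    rw [inv_mul_cancel₀ (by positivity), one_pow]
  calc (((((Real.sqrt (2 * Real.pi * ℏ))⁻¹ ^ n : ℝ) : ℂ)) *
        (((|P.det| : ℝ) : ℂ) * ∏ i, ((Real.pi : ℂ) / b₁ i) ^ (1/2 : ℂ))) *
      ((((Real.sqrt (2 * Real.pi * ℏ))⁻¹ ^ n : ℝ) : ℂ) *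
        (((|R.det| : ℝ) : ℂ) * ∏ i, ((Real.pi : ℂ) / b₂ i) ^ (1/2 : ℂ)))
      = ((((Real.sqrt (2 * Real.pi * ℏ))⁻¹ ^ n : ℝ) : ℂ)
          * (((Real.sqrt (2 * Real.pi * ℏ))⁻¹ ^ n : ℝ) : ℂ))
        * (((|P.det| : ℝ) : ℂ) * ((|R.det| : ℝ) : ℂ))
        * ((∏ i, ((Real.pi : ℂ) / b₁ i) ^ (1/2 : ℂ)) *
            (∏ i, ((Real.pi : ℂ) / b₂ i) ^ (1/2 : ℂ))) := by ring
    _ = 1 := by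
        rw [hdet, hprod, mul_one]
        exact hE

end
end

section
/- Fix n ∈ ℕ, ħ > 0, a matrix Λ ∈ Mat_n(ℂ) and vectors a, b ∈ ℂⁿ, and let f(u) = exp(⟨a,u⟩/(iħ)), g(u) = exp(⟨b,u⟩/(iħ)) on ℂⁿ. Then for every k ≥ 0 and u ∈ ℂⁿ: (iħ)^k/(k! 2^k) · Σ_{i₁,j₁,…,i_k,j_k=1}^n Λ_{i₁j₁}⋯Λ_{i_kj_k} (∂_{i₁}⋯∂_{i_k} f)(u) (∂_{j₁}⋯∂_{j_k} g)(u) = (1/k!) ((1/(2iħ)) aΛbᵀ)^k f(u) g(u), and the series over k converges to exp((1/(2iħ)) aΛbᵀ) f(u) g(u). Consequently, if K ∈ Mat_n(ℂ) is symmetric, J ∈ Mat_n(ℂ) is skew-symmetric, and Λ = K + J, then the K-ordered exponentials E_K(a,u) := exp((1/(4iħ)) aKaᵀ + (1/(iħ))⟨a,u⟩) satisfy the exponential law E_K(a,·) *_K E_K(b,·) = exp((1/(2iħ)) aJbᵀ) · E_K(a+b,·), where *_K denotes the above series product. -/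
noncomputable section

/-- The pairing `⟨a,b⟩ = ∑ᵢ aᵢ bᵢ` (no conjugation). -/
def dotc {n : ℕ} (a b : Fin n → ℂ) : ℂ := ∑ i, a i * b i

/-- The partial derivative `∂ᵢ` of a function on ℂⁿ. -/
def pd {n : ℕ} (i : Fin n) (f : (Fin n → ℂ) → ℂ) : (Fin n → ℂ) → ℂ :=
  fun u => fderiv ℂ f u (Pi.single i 1)

/-- Iterated partial derivatives `∂_{i₁} ⋯ ∂_{i_k}` along a list of indices. -/
def pds {n : ℕ} : List (Fin n) → ((Fin n → ℂ) → ℂ) → ((Fin n → ℂ) → ℂ)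
  | [], f => f
  | i :: l, f => pd i (pds l f)

/-- The `k`-th term of the K-ordered star-product series
`(iℏ)^k/(k!2^k) Σ Λ_{i₁j₁}⋯Λ_{i_kj_k} (∂_{i₁}⋯∂_{i_k} f)(∂_{j₁}⋯∂_{j_k} g)`. -/
def starTerm {n : ℕ} (ℏ : ℝ) (Λ : Matrix (Fin n) (Fin n) ℂ)
    (f g : (Fin n → ℂ) → ℂ) (k : ℕ) (u : Fin n → ℂ) : ℂ :=
  ((Complex.I * ℏ) ^ k / ((k.factorial : ℂ) * 2 ^ k)) *
    ∑ ι : Fin k → Fin n, ∑ κ : Fin k → Fin n,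
      (∏ t, Λ (ι t) (κ t)) * pds (List.ofFn ι) f u * pds (List.ofFn κ) g u

/-- The K-ordered exponential `E_K(a,u) = exp((1/(4iℏ)) aKaᵀ + (1/(iℏ))⟨a,u⟩)`. -/
def Eexp {n : ℕ} (ℏ : ℝ) (K : Matrix (Fin n) (Fin n) ℂ) (a : Fin n → ℂ)
    (u : Fin n → ℂ) : ℂ :=
  Complex.exp ((1 / (4 * Complex.I * ℏ)) * bil K a a + (1 / (Complex.I * ℏ)) * dotc a u)

section aux
variable {n : ℕ}

lemma pd_const_mul_exp (c C : ℂ) (a : Fin n → ℂ) (i : Fin n) :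
    pd i (fun u => C * Complex.exp (c * dotc a u))
      = fun u => (C * (c * a i)) * Complex.exp (c * dotc a u) := by
  funext u
  set ℓ : (Fin n → ℂ) →L[ℂ] ℂ := ∑ j, (c * a j) • (ContinuousLinearMap.proj j) with hℓdef
  have hℓ : ∀ x : Fin n → ℂ, ℓ x = c * dotc a x := by
    intro x
    simp [hℓdef, dotc, Finset.mul_sum, mul_assoc]
  have hinner : HasFDerivAt (fun u : Fin n → ℂ => c * dotc a u) ℓ u := by
    have h : (fun u : Fin n → ℂ => c * dotc a u) = ℓ := funext fun x => (hℓ x).symm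
    rw [h]; exact ℓ.hasFDerivAt
  have hexp : HasFDerivAt (fun u : Fin n → ℂ => Complex.exp (c * dotc a u))
      (Complex.exp (c * dotc a u) • ℓ) u :=
    (Complex.hasDerivAt_exp _).comp_hasFDerivAt u hinner
  have hC := hexp.const_mul C
  have hsingle : ℓ (Pi.single i 1) = c * a i := by
    simp [hℓdef, Pi.single_apply]
  rw [pd, hC.fderiv]
  simp [hsingle]
  ring

lemma pds_const_mul_exp (c C : ℂ) (a : Fin n → ℂ) (l : List (Fin n)) :
    pds l (fun u => C * Complex.exp (c * dotc a u))
      = fun u => (C * (l.map fun i => c * a i).prod) * Complex.exp (c * dotc a u) := by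
  induction l with
  | nil => simp [pds]
  | cons i l ih =>
      rw [pds, ih, pd_const_mul_exp]
      funext u
      simp
      ring

lemma sum_sum_prod (k : ℕ) (w : Fin n → Fin n → ℂ) :
    ∑ ι : Fin k → Fin n, ∑ κ : Fin k → Fin n, ∏ t, w (ι t) (κ t)
      = (∑ i, ∑ j, w i j) ^ k := by
  rw [Fintype.sum_pow]
  exact Finset.sum_congr rfl fun ι _ => (Fintype.prod_sum (fun t j => w (ι t) j)).symm

lemma key_scalar (ℏ : ℝ) (hh : (ℏ:ℂ) ≠ 0) (B : ℂ) (k : ℕ) :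
    (Complex.I * ℏ) ^ k / ((k.factorial : ℂ) * 2 ^ k) * ((1/(Complex.I*ℏ)) ^ 2 * B) ^ k
      = (1 / (k.factorial : ℂ)) * ((1 / (2 * Complex.I * ℏ)) * B) ^ k := by
  have h2 : (1:ℂ)/(2 * Complex.I * ℏ) = (Complex.I * ℏ) / 2 * (1/(Complex.I*ℏ)) ^ 2 := by
    field_simp
  rw [h2, mul_pow ((Complex.I * (ℏ:ℂ)) / 2 * (1/(Complex.I*ℏ)) ^ 2) B,
    mul_pow ((Complex.I * (ℏ:ℂ)) / 2), div_pow, mul_pow]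
  rw [div_pow, one_pow, mul_pow, div_pow]
  field_simp
  ring

lemma starTerm_exp (ℏ : ℝ) (hh : ((ℏ:ℂ)) ≠ 0)
    (Λ : Matrix (Fin n) (Fin n) ℂ) (a b : Fin n → ℂ) (C D : ℂ) (k : ℕ) (u : Fin n → ℂ) :
    starTerm ℏ Λ (fun u => C * Complex.exp ((1/(Complex.I*ℏ)) * dotc a u))
        (fun u => D * Complex.exp ((1/(Complex.I*ℏ)) * dotc b u)) k u
      = C * D * ((1 / (k.factorial : ℂ)) * ((1 / (2 * Complex.I * ℏ)) * bil Λ a b) ^ k)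
          * Complex.exp ((1/(Complex.I*ℏ)) * dotc a u)
          * Complex.exp ((1/(Complex.I*ℏ)) * dotc b u) := by
  set c : ℂ := 1/(Complex.I*ℏ) with hc
  set F : ℂ := Complex.exp (c * dotc a u)
  set G : ℂ := Complex.exp (c * dotc b u)
  have hterm : ∀ ι κ : Fin k → Fin n,
      (∏ t, Λ (ι t) (κ t)) * pds (List.ofFn ι)
          (fun u => C * Complex.exp (c * dotc a u)) u
        * pds (List.ofFn κ) (fun u => D * Complex.exp (c * dotc b u)) u
      = (C * D * F * G) * ∏ t, (c * a (ι t) * Λ (ι t) (κ t) * (c * b (κ t))) := by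
    intro ι κ
    rw [pds_const_mul_exp, pds_const_mul_exp]
    simp only [List.map_ofFn, List.prod_ofFn, Function.comp]
    rw [show (∏ t, (c * a (ι t) * Λ (ι t) (κ t) * (c * b (κ t))))
        = (∏ t, c * a (ι t)) * (∏ t, Λ (ι t) (κ t)) * (∏ t, c * b (κ t)) by
      rw [← Finset.prod_mul_distrib, ← Finset.prod_mul_distrib]]
    ring
  rw [starTerm]
  simp_rw [hterm, ← Finset.mul_sum]
  rw [sum_sum_prod k (fun i j => c * a i * Λ i j * (c * b j))]
  have hw : (∑ i, ∑ j, c * a i * Λ i j * (c * b j)) = c^2 * bil Λ a b := by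
    rw [bil, Finset.mul_sum]
    refine Finset.sum_congr rfl fun i _ => ?_
    rw [Finset.mul_sum]
    refine Finset.sum_congr rfl fun j _ => ?_
    ring
  rw [hw, hc]
  linear_combination (C * D * F * G) * key_scalar ℏ hh (bil Λ a b) k

lemma bil_add_matrix (K J : Matrix (Fin n) (Fin n) ℂ) (a b : Fin n → ℂ) :
    bil (K + J) a b = bil K a b + bil J a b := by
  simp [bil, Matrix.add_apply, mul_add, add_mul, Finset.sum_add_distrib]

lemma bil_swap_of_symm {K : Matrix (Fin n) (Fin n) ℂ} (hK : K.IsSymm) (a b : Fin n → ℂ) :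
    bil K b a = bil K a b := by
  rw [bil, bil, Finset.sum_comm]
  refine Finset.sum_congr rfl fun i _ => Finset.sum_congr rfl fun j _ => ?_
  rw [hK.apply i j]
  ring

lemma bil_add_vec (K : Matrix (Fin n) (Fin n) ℂ) (a b : Fin n → ℂ) :
    bil K (a + b) (a + b) = bil K a a + bil K a b + bil K b a + bil K b b := by
  have h : ∀ i j : Fin n, (a + b) i * K i j * (a + b) j
      = a i * K i j * a j + a i * K i j * b j + b i * K i j * a j + b i * K i j * b j := by
    intro i j; simp [Pi.add_apply]; ring
  simp only [bil]
  simp_rw [h]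
  simp [Finset.sum_add_distrib]

lemma dotc_add_left (a b u : Fin n → ℂ) : dotc (a + b) u = dotc a u + dotc b u := by
  simp [dotc, add_mul, Finset.sum_add_distrib]
end aux

/-- the star-product series of two exponentials of linear forms: the `k`-th
term collapses to `(1/k!)((1/(2iℏ)) aΛbᵀ)^k f g`, the series converges to
`exp((1/(2iℏ)) aΛbᵀ) f g`, and consequently the K-ordered exponentials obey the
exponential law `E_K(a,·) *_K E_K(b,·) = exp((1/(2iℏ)) aJbᵀ) E_K(a+b,·)`. -/
theorem stmt6 {n : ℕ} (ℏ : ℝ) (hℏ : 0 < ℏ)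
    (Λ : Matrix (Fin n) (Fin n) ℂ) (a b : Fin n → ℂ)
    (f g : (Fin n → ℂ) → ℂ)
    (hf : f = fun u => Complex.exp ((1 / (Complex.I * ℏ)) * dotc a u))
    (hg : g = fun u => Complex.exp ((1 / (Complex.I * ℏ)) * dotc b u)) :
    (∀ (k : ℕ) (u : Fin n → ℂ),
      starTerm ℏ Λ f g k u
        = (1 / (k.factorial : ℂ)) * ((1 / (2 * Complex.I * ℏ)) * bil Λ a b) ^ k
            * f u * g u) ∧
    (∀ u : Fin n → ℂ,
      HasSum (fun k : ℕ => starTerm ℏ Λ f g k u)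
        (Complex.exp ((1 / (2 * Complex.I * ℏ)) * bil Λ a b) * f u * g u)) ∧
    (∀ K J : Matrix (Fin n) (Fin n) ℂ, K.IsSymm → J.transpose = -J → Λ = K + J →
      ∀ u : Fin n → ℂ,
        HasSum (fun k : ℕ => starTerm ℏ Λ (Eexp ℏ K a) (Eexp ℏ K b) k u)
          (Complex.exp ((1 / (2 * Complex.I * ℏ)) * bil J a b) * Eexp ℏ K (a + b) u)) := by
  have hh : ((ℏ:ℂ)) ≠ 0 := by
    exact_mod_cast ne_of_gt hℏ
  set z : ℂ := (1 / (2 * Complex.I * ℏ)) * bil Λ a b with hz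
  have part1 : ∀ (k : ℕ) (u : Fin n → ℂ),
      starTerm ℏ Λ f g k u
        = (1 / (k.factorial : ℂ)) * z ^ k * f u * g u := by
    intro k u
    have h := starTerm_exp ℏ hh Λ a b 1 1 k u
    simp only [one_mul] at h
    rw [hf, hg]
    linear_combination h
  refine ⟨part1, ?_, ?_⟩
  · intro u
    have hfun : (fun k : ℕ => starTerm ℏ Λ f g k u)
        = fun k : ℕ => z ^ k / (k.factorial : ℂ) * (f u * g u) := by
      funext k
      rw [part1 k u]
      ring
    rw [hfun, Complex.exp_eq_exp_ℂ]
    have hsum := (NormedSpace.expSeries_div_hasSum_exp z).mul_right (f u * g u)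
    simpa [mul_assoc] using hsum
  · intro K J hK hJ hΛ u
    set Ca : ℂ := Complex.exp ((1 / (4 * Complex.I * ℏ)) * bil K a a) with hCa
    set Cb : ℂ := Complex.exp ((1 / (4 * Complex.I * ℏ)) * bil K b b) with hCb
    set F : ℂ := Complex.exp ((1 / (Complex.I * ℏ)) * dotc a u) with hF
    set G : ℂ := Complex.exp ((1 / (Complex.I * ℏ)) * dotc b u) with hG
    have hEa : Eexp ℏ K a = fun u => Ca * Complex.exp ((1 / (Complex.I * ℏ)) * dotc a u) := by
      funext v; rw [Eexp, Complex.exp_add, hCa]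
    have hEb : Eexp ℏ K b = fun u => Cb * Complex.exp ((1 / (Complex.I * ℏ)) * dotc b u) := by
      funext v; rw [Eexp, Complex.exp_add, hCb]
    have hfun : (fun k : ℕ => starTerm ℏ Λ (Eexp ℏ K a) (Eexp ℏ K b) k u)
        = fun k : ℕ => z ^ k / (k.factorial : ℂ) * (Ca * Cb * F * G) := by
      funext k
      rw [hEa, hEb, starTerm_exp ℏ hh Λ a b Ca Cb k u]
      rw [hF, hG, hz]
      ring
    rw [hfun]
    have hsum := (NormedSpace.expSeries_div_hasSum_exp z).mul_right (Ca * Cb * F * G)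
    have hval : NormedSpace.exp z * (Ca * Cb * F * G)
        = Complex.exp ((1 / (2 * Complex.I * ℏ)) * bil J a b) * Eexp ℏ K (a + b) u := by
      rw [← Complex.exp_eq_exp_ℂ]
      rw [hz, hCa, hCb, hF, hG, Eexp]
      simp only [← Complex.exp_add]
      congr 1
      rw [hΛ, bil_add_matrix, bil_add_vec, bil_swap_of_symm hK, dotc_add_left]
      ring
    rw [← hval]
    exact hsum

end
end

section
/- Fix ħ > 0 and δ, δ′, c ∈ ℂ with Q := (1−c)² − δδ′ ≠ 0. For t ∈ ℝ set Δ(t) = e^t + e^{−t} − c(e^t − e^{−t}) and D(t) = Δ(t)² − (e^t − e^{−t})² δδ′. Then D(t) ≠ 0 for all sufficiently large t, and for every (u,v) ∈ ℂ² one has the limit, as t → +∞: e^{2t} · (4 / D(t)) · exp( (2/(iħ)) · ((e^t − e^{−t})/D(t)) · ( (e^t − e^{−t})(δ′u² + δv²) + 2Δ(t)uv ) ) → (4/Q) · exp( (2/(iħ)) (δ′u² + 2(1−c)uv + δv²) / Q ). (This is the square of the K-ordered expression e^t · :e_*^{t(1/(iħ)) 2ũ∘ṽ}:_K = :e_*^{t(1/(iħ))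 2ṽ*ũ}:_K converging, as t → ∞, to the square of the bar-vacuum ϖ̄₀₀; squaring removes the square-root branch ambiguity.) -/
noncomputable section

/-- with `Δ(t) = e^t + e^{−t} − c(e^t − e^{−t})` and
`D(t) = Δ(t)² − (e^t − e^{−t})² δδ′`, if `Q = (1−c)² − δδ′ ≠ 0` then `D(t) ≠ 0` for all
sufficiently large `t`, and as `t → +∞` the squared K-ordered expression
`e^{2t} (4/D(t)) exp((2/(iℏ)) ((e^t−e^{−t})/D(t)) ((e^t−e^{−t})(δ′u²+δv²) + 2Δ(t)uv))`
converges to `(4/Q) exp((2/(iℏ)) (δ′u² + 2(1−c)uv + δv²)/Q)` (the square of the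
bar-vacuum `ϖ̄₀₀`). -/
theorem stmt14 (ℏ : ℝ) (hℏ : 0 < ℏ) (δ δ' c : ℂ) (Q : ℂ)
    (hQ : Q = (1 - c) ^ 2 - δ * δ') (hQ0 : Q ≠ 0)
    (Δ D : ℝ → ℂ)
    (hΔ : Δ = fun t : ℝ =>
      Complex.exp t + Complex.exp (-t) - c * (Complex.exp t - Complex.exp (-t)))
    (hD : D = fun t : ℝ =>
      (Δ t) ^ 2 - (Complex.exp t - Complex.exp (-t)) ^ 2 * (δ * δ')) :
    (∃ T : ℝ, ∀ t : ℝ, T ≤ t → D t ≠ 0) ∧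
    ∀ u v : ℂ,
      Filter.Tendsto
        (fun t : ℝ =>
          Complex.exp (2 * (t : ℂ)) * (4 / D t) *
            Complex.exp ((2 / (Complex.I * ℏ)) *
              ((Complex.exp t - Complex.exp (-t)) / D t) *
              ((Complex.exp t - Complex.exp (-t)) * (δ' * u ^ 2 + δ * v ^ 2)
                + 2 * Δ t * u * v)))
        Filter.atTop
        (nhds ((4 / Q) *
          Complex.exp ((2 / (Complex.I * ℏ)) *
            (δ' * u ^ 2 + 2 * (1 - c) * u * v + δ * v ^ 2) / Q))) := by
  set P : ℂ → ℂ := fun z => Q + 2 * ((1 - c ^ 2) + δ * δ') * z + ((1 + c) ^ 2 - δ * δ') * z ^ 2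
    with hP
  set x : ℝ → ℂ := fun t => Complex.exp (-(2 * (t : ℂ))) with hx
  -- key identity for D
  have hE2 : ∀ t : ℝ, Complex.exp (2 * (t : ℂ)) = (Complex.exp t) ^ 2 := by
    intro t; rw [two_mul, Complex.exp_add]; ring
  have hEne : ∀ t : ℝ, Complex.exp (t : ℂ) ≠ 0 := fun t => Complex.exp_ne_zero _
  have hEinv : ∀ t : ℝ, Complex.exp (-(t : ℂ)) = (Complex.exp (t : ℂ))⁻¹ := fun t =>
    Complex.exp_neg _
  have hxinv : ∀ t : ℝ, x t = ((Complex.exp (t : ℂ)) ^ 2)⁻¹ := by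
    intro t; rw [hx]; simp only []; rw [Complex.exp_neg, hE2]
  have keyD : ∀ t : ℝ, D t = Complex.exp (2 * (t : ℂ)) * P (x t) := by
    intro t
    rw [hD, hΔ]
    simp only [hP, hxinv, hE2, hEinv]
    have h := hEne t
    field_simp
    rw [hQ]
    ring
  have keyN : ∀ (t : ℝ) (u v : ℂ),
      (Complex.exp (t : ℂ) - Complex.exp (-(t : ℂ))) *
        ((Complex.exp (t : ℂ) - Complex.exp (-(t : ℂ))) * (δ' * u ^ 2 + δ * v ^ 2)
          + 2 * Δ t * u * v) =
      Complex.exp (2 * (t : ℂ)) *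
        ((1 - 2 * x t + (x t) ^ 2) * (δ' * u ^ 2 + δ * v ^ 2)
          + 2 * u * v * ((1 - c) + 2 * c * x t - (1 + c) * (x t) ^ 2)) := by
    intro t u v
    rw [hΔ]
    simp only [hxinv, hE2, hEinv]
    have h := hEne t
    field_simp
    ring
  have hx0 : Filter.Tendsto x Filter.atTop (nhds 0) := by
    have h2t : Filter.Tendsto (fun t : ℝ => -(2 * t)) Filter.atTop Filter.atBot :=
      Filter.tendsto_neg_atTop_atBot.comp (Filter.tendsto_id.const_mul_atTop two_pos)
    have h1 : Filter.Tendsto (fun t : ℝ => Real.exp (-(2 * t))) Filter.atTop (nhds 0) :=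
      Real.tendsto_exp_atBot.comp h2t
    have h3 := (Complex.continuous_ofReal.tendsto 0).comp h1
    simp only [Function.comp_def, Complex.ofReal_zero] at h3
    refine h3.congr fun t => ?_
    simp only [hx]
    rw [Complex.ofReal_exp]
    norm_cast
  have hPQ : Filter.Tendsto (fun t : ℝ => P (x t)) Filter.atTop (nhds Q) := by
    have hPc : Continuous P := by fun_prop
    have := (hPc.tendsto 0).comp hx0
    simpa [hP, Function.comp_def] using this
  have hevD : ∀ᶠ t : ℝ in Filter.atTop, D t ≠ 0 := by
    filter_upwards [hPQ.eventually_ne hQ0] with t ht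
    rw [keyD t]
    exact mul_ne_zero (Complex.exp_ne_zero _) ht
  constructor
  · exact Filter.eventually_atTop.mp hevD
  · intro u v
    set M : ℂ → ℂ := fun z => (1 - 2 * z + z ^ 2) * (δ' * u ^ 2 + δ * v ^ 2)
      + 2 * u * v * ((1 - c) + 2 * c * z - (1 + c) * z ^ 2) with hM
    have heq : ∀ t : ℝ,
        Complex.exp (2 * (t : ℂ)) * (4 / D t) *
            Complex.exp ((2 / (Complex.I * ℏ)) *
              ((Complex.exp t - Complex.exp (-t)) / D t) *
              ((Complex.exp t - Complex.exp (-t)) * (δ' * u ^ 2 + δ * v ^ 2)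
                + 2 * Δ t * u * v)) =
        (4 / P (x t)) * Complex.exp ((2 / (Complex.I * ℏ)) * (M (x t) / P (x t))) := by
      intro t
      have hDt := keyD t
      have hNt := keyN t u v
      by_cases hPz : P (x t) = 0
      · rw [hDt, hPz, mul_zero, div_zero, mul_zero, zero_mul, div_zero, zero_mul]
      · have hDne : D t ≠ 0 := by
          rw [hDt]; exact mul_ne_zero (Complex.exp_ne_zero _) hPz
        have harg : ((Complex.exp (t:ℂ) - Complex.exp (-(t:ℂ))) / D t) *
              ((Complex.exp (t:ℂ) - Complex.exp (-(t:ℂ))) * (δ' * u ^ 2 + δ * v ^ 2)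
                + 2 * Δ t * u * v) = M (x t) / P (x t) := by
          rw [div_mul_eq_mul_div, hNt, hDt, hM]
          exact mul_div_mul_left _ _ (Complex.exp_ne_zero _)
        rw [mul_assoc (2 / (Complex.I * (ℏ:ℂ))), harg, hDt]
        have h4 : Complex.exp (2 * (t:ℂ)) * (4 / (Complex.exp (2 * (t:ℂ)) * P (x t)))
            = 4 / P (x t) := by
          rw [mul_div_assoc']
          exact mul_div_mul_left _ _ (Complex.exp_ne_zero _)
        rw [h4]
    have hPc : Continuous P := by fun_prop
    have hMc : Continuous M := by fun_prop
    have hF : Filter.Tendsto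
        (fun z : ℂ => (4 / P z) * Complex.exp ((2 / (Complex.I * ℏ)) * (M z / P z)))
        (nhds 0) (nhds ((4 / Q) *
          Complex.exp ((2 / (Complex.I * ℏ)) *
            (δ' * u ^ 2 + 2 * (1 - c) * u * v + δ * v ^ 2) / Q))) := by
      have hP0 : P 0 = Q := by simp [hP]
      have hM0 : M 0 = δ' * u ^ 2 + δ * v ^ 2 + 2 * u * v * (1 - c) := by simp [hM]
      have hc : ContinuousAt
          (fun z : ℂ => (4 / P z) * Complex.exp ((2 / (Complex.I * ℏ)) * (M z / P z))) 0 := by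
        apply ContinuousAt.mul
        · exact (continuousAt_const.div (hPc.continuousAt) (by rw [hP0]; exact hQ0))
        · exact (Complex.continuous_exp.continuousAt).comp
            (continuousAt_const.mul ((hMc.continuousAt).div (hPc.continuousAt)
              (by rw [hP0]; exact hQ0)))
      have := hc.tendsto
      rw [hP0, hM0] at this
      convert this using 3
      · rw [mul_div_assoc]
        ring_nf
      all_goals rfl
    have := hF.comp hx0
    refine this.congr fun t => (heq t).symm
end
end
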